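/- Let x̄ be a list of variables and α a solved basic formula. Let x̄' be the variables among x̄ that are reachable in α from the free variables of ∃x̄. α, and let α' be the conjunction of those conjuncts of α that are reachable from the free variables of ∃x̄. α. Then ∃x̄. α and ∃x̄'. α' are equivalent in the extended theory of trees, i.e. satisfied by exactly the same valuations in the structure 𝒯 of trees. -/

import Mathlib

set_option linter.unusedVariables false


/-- A many-sorted signature: sorts and generators (function symbols),
each generator `g` having argument sorts `src g` and target sort `tgt g`. -/
structure Sig where
  Srt : Type
  Gen : Type
  tgt : Gen → Srt
  src : Gen → List Srt

namespace Sig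

variable (σ : Sig)

/-- The generators of a sort `s`. -/
def Gens (s : σ.Srt) : Set σ.Gen := { g | σ.tgt g = s }

/-- A labeling of positions (lists of natural numbers) by generators is a valid
tree labeling if children exist exactly according to arity and have the right sorts. -/
def IsLabeling (L : List ℕ → Option σ.Gen) : Prop :=
  (∀ p, L p = none → ∀ i, L (p ++ [i]) = none) ∧
  (∀ p g, L p = some g → ∀ i, ((L (p ++ [i])).isSome ↔ i < (σ.src g).length)) ∧
  (∀ p g i g', L p = some g → L (p ++ [i]) = some g' →
      (σ.src g)[i]? = some (σ.tgt g'))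

/-- A (possibly infinite) tree of sort `s`. -/
structure Tree (s : σ.Srt) where
  L : List ℕ → Option σ.Gen
  isLab : σ.IsLabeling L
  root : ∃ g, L [] = some g ∧ σ.tgt g = s

variable {σ}

/-- A tree is finite if it has finitely many nodes. -/
def Tree.IsFinite {s : σ.Srt} (t : σ.Tree s) : Prop :=
  { p : List ℕ | (t.L p).isSome }.Finite

/-- The tree has depth at most `d`. -/
def Tree.DepthLE {s : σ.Srt} (t : σ.Tree s) (d : ℕ) : Prop :=
  ∀ p, (t.L p).isSome → p.length ≤ d

variable (σ)

/-- Build a tree with root labeled `g` from given immediate subtrees. -/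
def build (g : σ.Gen) (c : ∀ i : Fin (σ.src g).length, σ.Tree ((σ.src g).get i)) :
    σ.Tree (σ.tgt g) where
  L := fun p =>
    match p with
    | [] => some g
    | i :: q => if h : i < (σ.src g).length then (c ⟨i, h⟩).L q else none
  isLab := by
    refine ⟨?_, ?_, ?_⟩
    · intro p hp i
      match p with
      | [] => simp at hp
      | j :: q =>
        simp only [List.cons_append]
        by_cases h : j < (σ.src g).length
        · simp only [dif_pos h] at hp ⊢
          exact (c ⟨j, h⟩).isLab.1 q hp i
        · simp only [dif_neg h]
    · intro p g' hp i
      match p with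
      | [] =>
        injection hp with hg
        subst hg
        by_cases h : i < (σ.src g).length
        · simp only [List.nil_append, dif_pos h]
          obtain ⟨g₀, h₀, -⟩ := (c ⟨i, h⟩).root
          simp [h₀, h]
        · simp [List.nil_append, dif_neg h, h]
      | j :: q =>
        by_cases h : j < (σ.src g).length
        · simp only [dif_pos h] at hp
          simp only [List.cons_append, dif_pos h]
          exact (c ⟨j, h⟩).isLab.2.1 q g' hp i
        · simp only [dif_neg h] at hp
          cases hp
    · intro p g' i g'' hp hpi
      match p with
      | [] =>
        injection hp with hg
        subst hg
        by_cases h : i < (σ.src g).length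
        · simp only [List.nil_append, dif_pos h] at hpi
          obtain ⟨g₀, h₀, htgt⟩ := (c ⟨i, h⟩).root
          rw [h₀, Option.some.injEq] at hpi
          subst hpi
          rw [List.getElem?_eq_getElem h]
          exact congrArg some htgt.symm
        · simp only [List.nil_append, dif_neg h] at hpi
          cases hpi
      | j :: q =>
        by_cases h : j < (σ.src g).length
        · simp only [dif_pos h] at hp
          simp only [List.cons_append, dif_pos h] at hpi
          exact (c ⟨j, h⟩).isLab.2.2 q g' i g'' hp hpi
        · simp only [dif_neg h] at hp
          cases hp
  root := ⟨g, rfl, rfl⟩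

/-- Sorts with no infinite trees. -/
def S0I : Set σ.Srt := { s | ∀ t : σ.Tree s, t.IsFinite }
/-- Sorts with no finite trees. -/
def S0F : Set σ.Srt := { s | ∀ t : σ.Tree s, ¬ t.IsFinite }
/-- Sorts with only finitely many finite trees. -/
def SFF : Set σ.Srt := { s | { t : σ.Tree s | t.IsFinite }.Finite }
/-- Sorts with only finitely many infinite trees. -/
def SFI : Set σ.Srt := { s | { t : σ.Tree s | ¬ t.IsFinite }.Finite }
/-- Sorts with exactly one infinite tree. -/
def S1I : Set σ.Srt := { s | ∃! t : σ.Tree s, ¬ t.IsFinite }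

/-- Terms of the (extended) first-order language of trees. Variables are
pairs of a sort and a number. -/
inductive Tm : σ.Srt → Type
  | var (s : σ.Srt) (n : ℕ) : Tm s
  | app (g : σ.Gen) (args : ∀ i : Fin (σ.src g).length, Tm ((σ.src g).get i)) :
      Tm (σ.tgt g)

/-- Valuations assign trees to (sorted) variables. -/
def Val := ∀ s : σ.Srt, ℕ → σ.Tree s

variable {σ}

/-- Evaluation of a term in the structure of trees under a valuation. -/
def Tm.eval (ρ : σ.Val) : ∀ {s : σ.Srt}, σ.Tm s → σ.Tree s
  | _, .var s n => ρ s n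
  | _, .app g args => σ.build g (fun i => (args i).eval ρ)

/-- The (sorted) free variables of a term. -/
def Tm.fv : ∀ {s : σ.Srt}, σ.Tm s → Set ((s : σ.Srt) × ℕ)
  | _, .var s n => {⟨s, n⟩}
  | _, .app _ args => ⋃ i, (args i).fv

/-- A term is flat if it is a variable or a generator applied to variables. -/
def Tm.IsFlat : ∀ {s : σ.Srt}, σ.Tm s → Prop
  | _, .var _ _ => True
  | _, .app g args => ∀ i : Fin (σ.src g).length, ∃ n, args i = Tm.var ((σ.src g).get i) n

/-- A term of the form `f(z̄)`. -/
def Tm.IsApp : ∀ {s : σ.Srt}, σ.Tm s → Prop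
  | _, .var _ _ => False
  | _, .app _ _ => True

open Classical in
/-- Update a valuation at one sorted variable. -/
noncomputable def updV (ρ : σ.Val) (s : σ.Srt) (n : ℕ) (t : σ.Tree s) : σ.Val :=
  fun s' m =>
    if h : s' = s then
      (if m = n then cast (congrArg σ.Tree h.symm) t else ρ s' m)
    else ρ s' m

variable (σ)

/-- Formulae of the extended first-order language of trees: equality,
the finiteness predicates `fin`, propositional connectives and sorted quantifiers. -/
inductive Fml : Type
  | tru : Fml
  | fls : Fml
  | eq {s : σ.Srt} (a b : σ.Tm s) : Fml
  | fin {s : σ.Srt} (a : σ.Tm s) : Fml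
  | not (φ : Fml) : Fml
  | and (φ ψ : Fml) : Fml
  | or (φ ψ : Fml) : Fml
  | imp (φ ψ : Fml) : Fml
  | ex (s : σ.Srt) (n : ℕ) (φ : Fml) : Fml
  | all (s : σ.Srt) (n : ℕ) (φ : Fml) : Fml

variable {σ}

/-- Satisfaction of a formula in the structure `𝒯` of trees under a valuation. -/
def Fml.Sat (ρ : σ.Val) : σ.Fml → Prop
  | .tru => True
  | .fls => False
  | .eq a b => a.eval ρ = b.eval ρ
  | .fin a => (a.eval ρ).IsFinite
  | .not φ => ¬ φ.Sat ρ
  | .and φ ψ => φ.Sat ρ ∧ ψ.Sat ρ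
  | .or φ ψ => φ.Sat ρ ∨ ψ.Sat ρ
  | .imp φ ψ => φ.Sat ρ → ψ.Sat ρ
  | .ex s n φ => ∃ t : σ.Tree s, φ.Sat (updV ρ s n t)
  | .all s n φ => ∀ t : σ.Tree s, φ.Sat (updV ρ s n t)

/-- The free variables of a formula. -/
def Fml.fv : σ.Fml → Set ((s : σ.Srt) × ℕ)
  | .tru => ∅
  | .fls => ∅
  | .eq a b => a.fv ∪ b.fv
  | .fin a => a.fv
  | .not φ => φ.fv
  | .and φ ψ => φ.fv ∪ ψ.fv
  | .or φ ψ => φ.fv ∪ ψ.fv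
  | .imp φ ψ => φ.fv ∪ ψ.fv
  | .ex s n φ => φ.fv \ {⟨s, n⟩}
  | .all s n φ => φ.fv \ {⟨s, n⟩}

/-- Two formulae are equivalent in the extended theory of trees if they are
satisfied by exactly the same valuations. -/
def FmlEquiv (φ ψ : σ.Fml) : Prop := ∀ ρ : σ.Val, φ.Sat ρ ↔ ψ.Sat ρ


variable (σ)

/-- A basic formula: a conjunction of equations `v = t` (with `t` a flat term)
and finiteness constraints `fin(u)`, represented by the list of equations
(a sort, the left-hand-side variable, the right-hand-side term) and the list of
`fin`-variables. -/
structure Basic where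
  eqs : List ((s : σ.Srt) × ℕ × σ.Tm s)
  fins : List ((s : σ.Srt) × ℕ)

variable {σ}

/-- Well-formedness of a basic formula: all right-hand sides are flat. -/
def Basic.WF (β : σ.Basic) : Prop := ∀ e ∈ β.eqs, (e.2.2).IsFlat

/-- Satisfaction of a basic formula under a valuation. -/
def Basic.Sat (β : σ.Basic) (ρ : σ.Val) : Prop :=
  (∀ e ∈ β.eqs, ρ e.1 e.2.1 = (e.2.2).eval ρ) ∧
  (∀ u ∈ β.fins, (ρ u.1 u.2).IsFinite)

/-- The variables occurring in a basic formula. -/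
def Basic.vars (β : σ.Basic) : Set ((s : σ.Srt) × ℕ) :=
  { x | (∃ e ∈ β.eqs, (⟨e.1, e.2.1⟩ : (s : σ.Srt) × ℕ) = x ∨ x ∈ (e.2.2).fv) ∨ x ∈ β.fins }

/-- One step of reachability: `y` occurs in the right-hand side of an equation
whose left-hand side is `x`. -/
def Basic.step (β : σ.Basic) (x y : (s : σ.Srt) × ℕ) : Prop :=
  ∃ e ∈ β.eqs, (⟨e.1, e.2.1⟩ : (s : σ.Srt) × ℕ) = x ∧ y ∈ (e.2.2).fv

/-- `y` is reachable from `x` (by a chain of equations, possibly empty). -/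
def Basic.Reach (β : σ.Basic) (x y : (s : σ.Srt) × ℕ) : Prop :=
  Relation.ReflTransGen β.step x y

/-- `y` is properly reachable from `x` (by a nonempty chain of equations). -/
def Basic.ProperReach (β : σ.Basic) (x y : (s : σ.Srt) × ℕ) : Prop :=
  Relation.TransGen β.step x y

open Classical in
/-- The index of an element in a list (used to compare variables in a given ordering). -/
noncomputable def idx {A : Type*} (vs : List A) (x : A) : ℕ :=
  vs.findIdx fun y => decide (y = x)

/-- `x` is smaller than `y` in the variable ordering given by the list `vs`. -/
noncomputable def ltv {A : Type*} (vs : List A) (x y : A) : Prop :=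
  idx vs x < idx vs y

/-- A basic formula is solved with respect to the variable ordering `vs`:
(1) the left-hand-side variables of equations and the `fin`-variables are
pairwise distinct and every equation `x = y` between variables has `x > y`;
(2) `fin(v)` occurs only if the sort of `v` has both finite and infinite trees. -/
noncomputable def Solved (vs : List ((s : σ.Srt) × ℕ)) (β : σ.Basic) : Prop :=
  ((β.eqs.map fun e => (⟨e.1, e.2.1⟩ : (s : σ.Srt) × ℕ)) ++ β.fins).Nodup ∧
  (∀ e ∈ β.eqs, ∀ n : ℕ, e.2.2 = Sig.Tm.var e.1 n →
      ltv vs (⟨e.1, n⟩ : (s : σ.Srt) × ℕ) ⟨e.1, e.2.1⟩) ∧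
  (∀ u ∈ β.fins, (∃ t : σ.Tree u.1, t.IsFinite) ∧ (∃ t : σ.Tree u.1, ¬ t.IsFinite))

/-- `ρ'` agrees with `ρ` outside the set `V` of variables. -/
def AgreesOff (ρ ρ' : σ.Val) (V : Set ((s : σ.Srt) × ℕ)) : Prop :=
  ∀ (s : σ.Srt) (n : ℕ), (⟨s, n⟩ : (s : σ.Srt) × ℕ) ∉ V → ρ' s n = ρ s n

variable (σ)

/-- A normal formula of depth at most 2,
`¬(∃x̄. α ∧ ⋀ᵢ ¬(∃ȳᵢ. βᵢ))`, given by the bound variables `x̄`,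
the basic formula `α` and the list of pairs `(ȳᵢ, βᵢ)`. -/
structure NF2 where
  xs : List ((s : σ.Srt) × ℕ)
  base : σ.Basic
  inner : List (List ((s : σ.Srt) × ℕ) × σ.Basic)

variable {σ}

/-- Well-formedness of the basic subformulae of a normal formula of depth ≤ 2. -/
def NF2.WF (φ : σ.NF2) : Prop := φ.base.WF ∧ ∀ p ∈ φ.inner, (p.2).WF

/-- Satisfaction of the inner part `∃x̄. α ∧ ⋀ᵢ ¬(∃ȳᵢ. βᵢ)` of a normal formula
of depth ≤ 2 (this is the shape of a fully simplified formula). -/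
def NF2.PosSat (φ : σ.NF2) (ρ : σ.Val) : Prop :=
  ∃ ρ₁ : σ.Val, AgreesOff ρ ρ₁ { x | x ∈ φ.xs } ∧ φ.base.Sat ρ₁ ∧
    ∀ p ∈ φ.inner, ¬ ∃ ρ₂ : σ.Val, AgreesOff ρ₁ ρ₂ { x | x ∈ p.1 } ∧ (p.2).Sat ρ₂

/-- Satisfaction of a normal formula `¬(∃x̄. α ∧ ⋀ᵢ ¬(∃ȳᵢ. βᵢ))` of depth ≤ 2. -/
def NF2.Sat (φ : σ.NF2) (ρ : σ.Val) : Prop := ¬ φ.PosSat ρ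

/-- The free variables of a normal formula of depth ≤ 2. -/
def NF2.fv (φ : σ.NF2) : Set ((s : σ.Srt) × ℕ) :=
  (φ.base.vars \ { x | x ∈ φ.xs }) ∪
    { x | ∃ p ∈ φ.inner, x ∈ (p.2).vars ∧ x ∉ φ.xs ∧ x ∉ p.1 }

/-- All variables occurring (bound or free) in a normal formula of depth ≤ 2. -/
def NF2.allVars (φ : σ.NF2) : Set ((s : σ.Srt) × ℕ) :=
  φ.base.vars ∪ { x | x ∈ φ.xs } ∪ { x | ∃ p ∈ φ.inner, x ∈ p.1 ∨ x ∈ (p.2).vars }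

open Classical in
/-- `β` with all conjuncts also occurring in `α` removed (written `β*`). -/
noncomputable def bstar (α β : σ.Basic) : σ.Basic where
  eqs := β.eqs.filter fun e => decide (e ∉ α.eqs)
  fins := β.fins.filter fun u => decide (u ∉ α.fins)

/-- `β` contains an equation `u = f(w̄)`. -/
def HasEqApp (β : σ.Basic) (u : (s : σ.Srt) × ℕ) : Prop :=
  ∃ e ∈ β.eqs, (⟨e.1, e.2.1⟩ : (s : σ.Srt) × ℕ) = u ∧ (e.2.2).IsApp

/-- `α` contains an equation with left-hand side `u`. -/
def HasLhs (α : σ.Basic) (u : (s : σ.Srt) × ℕ) : Prop :=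
  ∃ e ∈ α.eqs, (⟨e.1, e.2.1⟩ : (s : σ.Srt) × ℕ) = u

/-- Definition of an instantiable variable of a normal formula
`¬(∃x̄. α ∧ ⋀ᵢ ¬(∃ȳᵢ. βᵢ))` of depth at most 2 (Definition of the paper):
`u` is free or among `x̄` and one of the four conditions holds. -/
def NF2.Instantiable (φ : σ.NF2) (u : (s : σ.Srt) × ℕ) : Prop :=
  (u ∈ φ.fv ∨ u ∈ φ.xs) ∧
  ( ((σ.Gens u.1).Finite ∧ ∃ p ∈ φ.inner,
        HasEqApp (bstar φ.base p.2) u ∧ ¬ (p.2).ProperReach u u)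
  ∨ (u.1 ∈ σ.SFF ∩ σ.SFI ∧ (∃ p ∈ φ.inner, u ∈ (bstar φ.base p.2).vars) ∧
        ¬ HasLhs φ.base u)
  ∨ (u.1 ∈ σ.SFF ∧ u ∈ φ.base.fins ∧ ∃ p ∈ φ.inner, u ∈ (bstar φ.base p.2).vars)
  ∨ (u.1 ∈ σ.SFI ∧ ∃ p ∈ φ.inner,
        (bstar φ.base p.2).eqs = [] ∧ u ∈ (bstar φ.base p.2).fins) )

/-- A normal formula of depth at most 2 is solved (conditions (1)–(5) of the paper):
its basic subformulae are solved with respect to an ordering compatible with binding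
depth, the equations of `α` are included in each `βᵢ`, each `βᵢ` has a conjunct not
in `α`, no variable is instantiable, and all bound variables are reachable from
the free variables of the respective subformula. -/
noncomputable def NF2.IsSolved (φ : σ.NF2) : Prop :=
  (∃ vs : List ((s : σ.Srt) × ℕ), vs.Nodup ∧
    (∀ x ∈ φ.allVars, x ∈ vs) ∧
    (∀ a ∈ φ.fv, ∀ b ∈ φ.xs, ltv vs a b) ∧
    (∀ p ∈ φ.inner, ∀ b ∈ φ.xs, ∀ c ∈ p.1, ltv vs b c) ∧
    (∀ p ∈ φ.inner, ∀ a ∈ φ.fv, ∀ c ∈ p.1, ltv vs a c) ∧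
    Solved vs φ.base ∧ ∀ p ∈ φ.inner, Solved vs p.2) ∧
  (∀ p ∈ φ.inner, ∀ e ∈ φ.base.eqs, e ∈ (p.2).eqs) ∧
  (∀ p ∈ φ.inner, (∃ e ∈ (p.2).eqs, e ∉ φ.base.eqs) ∨ (∃ u ∈ (p.2).fins, u ∉ φ.base.fins)) ∧
  (∀ u : (s : σ.Srt) × ℕ, ¬ φ.Instantiable u) ∧
  (∀ x ∈ φ.xs, ∃ v, v ∈ φ.base.vars ∧ v ∉ φ.xs ∧ φ.base.Reach v x) ∧
  (∀ p ∈ φ.inner, ∀ y ∈ p.1, ∃ v, v ∈ (p.2).vars ∧ v ∉ p.1 ∧ (p.2).Reach v y)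

end Sig

/-- The set of variables of `α` reachable (via chains of equations) from the free
variables of `∃x̄. α`. -/
def reachSet (σ : Sig) (xs : List ((s : σ.Srt) × ℕ)) (α : σ.Basic) :
    Set ((s : σ.Srt) × ℕ) :=
  { u | ∃ v, v ∈ α.vars ∧ v ∉ xs ∧ Sig.Basic.Reach α v u }

/-- Satisfaction of `∃x̄. α` under a valuation `ρ`: some valuation agreeing with
`ρ` outside `x̄` satisfies `α`. -/
def SatEx (σ : Sig) (xs : List ((s : σ.Srt) × ℕ)) (α : σ.Basic) (ρ : σ.Val) : Prop :=
  ∃ ρ' : σ.Val, Sig.AgreesOff ρ ρ' { x | x ∈ xs } ∧ α.Sat ρ'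

namespace Sig

variable {σ : Sig}

theorem Tree.ext' {s : σ.Srt} {t t' : σ.Tree s} (h : t.L = t'.L) : t = t' := by
  cases t; cases t'; cases h; rfl

theorem Tm.eval_congr {ρ ρ' : σ.Val} : ∀ {s : σ.Srt} (t : σ.Tm s),
    (∀ v ∈ t.fv, ρ' v.1 v.2 = ρ v.1 v.2) → t.eval ρ' = t.eval ρ
  | _, .var s n, h => h ⟨s, n⟩ rfl
  | _, .app g args, h => by
      simp only [Tm.eval]
      congr 1
      funext i
      exact Tm.eval_congr (args i) fun v hv => h v (by
        simp only [Tm.fv, Set.mem_iUnion]; exact ⟨i, hv⟩)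

variable (σ) in
/-- A descriptor: either a concrete tree, or a generator applied to variables. -/
inductive Desc : σ.Srt → Type
  | tr {s : σ.Srt} (t : σ.Tree s) : Desc s
  | ap (g : σ.Gen) (zs : Fin (σ.src g).length → ℕ) : Desc (σ.tgt g)

open Classical in
/-- The (unique, if the lhs's are distinct) right-hand side of an equation with
left-hand side `x`. -/
noncomputable def pick (α : σ.Basic) (x : (s : σ.Srt) × ℕ) : Option (σ.Tm x.1) :=
  if h : ∃ t : σ.Tm x.1, (⟨x.1, x.2, t⟩ : (s : σ.Srt) × ℕ × σ.Tm s) ∈ α.eqs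
  then some h.choose else none

theorem pick_mem {α : σ.Basic} {x : (s : σ.Srt) × ℕ} {t : σ.Tm x.1}
    (h : pick α x = some t) :
    (⟨x.1, x.2, t⟩ : (s : σ.Srt) × ℕ × σ.Tm s) ∈ α.eqs := by
  unfold pick at h
  split at h
  · rename_i h'
    injection h with h
    subst h
    exact h'.choose_spec
  · cases h

theorem pick_eq {α : σ.Basic}
    (hnd : ((α.eqs.map fun e => (⟨e.1, e.2.1⟩ : (s : σ.Srt) × ℕ)) ++ α.fins).Nodup)
    {x : (s : σ.Srt) × ℕ} {t : σ.Tm x.1}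
    (h : (⟨x.1, x.2, t⟩ : (s : σ.Srt) × ℕ × σ.Tm s) ∈ α.eqs) : pick α x = some t := by
  have hex : ∃ t' : σ.Tm x.1, (⟨x.1, x.2, t'⟩ : (s : σ.Srt) × ℕ × σ.Tm s) ∈ α.eqs := ⟨t, h⟩
  unfold pick
  rw [dif_pos hex]
  have h2 := hex.choose_spec
  have h3 := List.inj_on_of_nodup_map (List.Nodup.of_append_left hnd) h2 h rfl
  have h4 : hex.choose = t := by simpa using h3
  rw [h4]

theorem pick_none_of_fins {α : σ.Basic}
    (hnd : ((α.eqs.map fun e => (⟨e.1, e.2.1⟩ : (s : σ.Srt) × ℕ)) ++ α.fins).Nodup)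
    {u : (s : σ.Srt) × ℕ} (hu : u ∈ α.fins) : pick α u = none := by
  unfold pick
  rw [dif_neg]
  rintro ⟨t, ht⟩
  have hdisj := List.disjoint_of_nodup_append hnd
  exact hdisj (List.mem_map.2 ⟨⟨u.1, u.2, t⟩, ht, Sigma.eta u⟩) hu

open Classical in
/-- Case analysis on a flat term: a variable index, or an app descriptor. -/
noncomputable def flatCases : {s : σ.Srt} → (t : σ.Tm s) → t.IsFlat → ℕ ⊕ Desc σ s
  | _, .var _ n, _ => .inl n
  | _, .app g args, hf =>
      .inr (.ap g fun i =>
        ((show ∀ i, ∃ n, args i = Tm.var ((σ.src g).get i) n from hf) i).choose)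

theorem flatCases_inl : ∀ {s : σ.Srt} {t : σ.Tm s} {hf : t.IsFlat} {n : ℕ},
    flatCases t hf = .inl n → t = .var s n
  | _, .var _ n', _, n, h => by
      simp only [flatCases] at h
      injection h with h
      rw [h]
  | _, .app g args, hf, n, h => by
      simp only [flatCases] at h
      cases h

theorem flatCases_inr : ∀ {s : σ.Srt} {t : σ.Tm s} {hf : t.IsFlat} {d : Desc σ s},
    flatCases t hf = .inr d → ∃ (g : σ.Gen) (args : ∀ i : Fin (σ.src g).length, σ.Tm ((σ.src g).get i))
      (zs : Fin (σ.src g).length → ℕ) (h1 : σ.tgt g = s),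
      (∀ i, args i = Tm.var ((σ.src g).get i) (zs i)) ∧
      HEq t (Tm.app g args) ∧ HEq d (Desc.ap g zs)
  | _, .var _ n', _, d, h => by
      simp only [flatCases] at h
      cases h
  | _, .app g args, hf, d, h => by
      simp only [flatCases] at h
      injection h with h
      exact ⟨g, args, _, rfl,
        fun i => ((show ∀ i, ∃ n, args i = Tm.var ((σ.src g).get i) n from hf) i).choose_spec,
        HEq.rfl, heq_of_eq h.symm⟩

section Resolve

variable (α : σ.Basic) (vs : List ((s : σ.Srt) × ℕ)) (hwf : α.WF)
  (hsol : Solved vs α) (R : Set ((s : σ.Srt) × ℕ)) (ρ₀ : σ.Val)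

open Classical in
/-- Resolve a variable to a descriptor: variables in `R` (and variables without
an equation) keep their `ρ₀`-value; otherwise follow the solved equations. -/
noncomputable def resolveF (α : σ.Basic) (vs : List ((s : σ.Srt) × ℕ)) (hwf : α.WF)
    (hsol : Solved vs α) (R : Set ((s : σ.Srt) × ℕ)) (ρ₀ : σ.Val)
    (s : σ.Srt) (m : ℕ) : Desc σ s :=
  if (⟨s, m⟩ : (s : σ.Srt) × ℕ) ∈ R then .tr (ρ₀ s m)
  else
    match hp : pick α ⟨s, m⟩ with
    | none => .tr (ρ₀ s m)
    | some t =>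
      match hfc : flatCases t (hwf _ (pick_mem hp)) with
      | .inl n => resolveF α vs hwf hsol R ρ₀ s n
      | .inr d => d
  termination_by idx vs ⟨s, m⟩
  decreasing_by
    have hv := flatCases_inl hfc
    subst hv
    exact hsol.2.1 _ (pick_mem hp) n rfl

/-- Abbreviation for `resolveF` as a resolver on sorted variables. -/
noncomputable def resolve (α : σ.Basic) (vs : List ((s : σ.Srt) × ℕ)) (hwf : α.WF)
    (hsol : Solved vs α) (R : Set ((s : σ.Srt) × ℕ)) (ρ₀ : σ.Val)
    (x : (s : σ.Srt) × ℕ) : Desc σ x.1 :=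
  resolveF α vs hwf hsol R ρ₀ x.1 x.2

variable (r : (x : (s : σ.Srt) × ℕ) → Desc σ x.1)

/-- Unfold a descriptor into a labeling, using `r` to resolve child variables. -/
noncomputable def walk : {s : σ.Srt} → Desc σ s → List ℕ → Option σ.Gen
  | _, .tr t, p => t.L p
  | _, .ap g _, [] => some g
  | _, .ap g zs, i :: q =>
      if h : i < (σ.src g).length
      then walk (r ⟨(σ.src g).get ⟨i, h⟩, zs ⟨i, h⟩⟩) q
      else none
  termination_by s d p => p.length
  decreasing_by simp

theorem walk_tr {s : σ.Srt} (t : σ.Tree s) (p : List ℕ) :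
    walk r (.tr t) p = t.L p := by
  simp [walk]

theorem walk_ap_nil (g : σ.Gen) (zs : Fin (σ.src g).length → ℕ) :
    walk r (.ap g zs) [] = some g := by
  simp [walk]

theorem walk_ap_cons (g : σ.Gen) (zs : Fin (σ.src g).length → ℕ) (i : ℕ) (q : List ℕ) :
    walk r (.ap g zs) (i :: q) =
      if h : i < (σ.src g).length
      then walk r (r ⟨(σ.src g).get ⟨i, h⟩, zs ⟨i, h⟩⟩) q
      else none := by
  simp [walk]

theorem walk_root : ∀ {s : σ.Srt} (d : Desc σ s),
    ∃ g, walk r d [] = some g ∧ σ.tgt g = s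
  | _, .tr t => by rw [walk_tr]; exact t.root
  | _, .ap g zs => ⟨g, walk_ap_nil r g zs, rfl⟩

theorem walk_none : ∀ (p : List ℕ) {s : σ.Srt} (d : Desc σ s),
    walk r d p = none → ∀ i, walk r d (p ++ [i]) = none := by
  intro p
  induction p with
  | nil =>
    intro s d h i
    cases d with
    | tr t => rw [walk_tr] at h ⊢; exact t.isLab.1 [] h i
    | ap g zs => rw [walk_ap_nil] at h; cases h
  | cons j q ih =>
    intro s d h i
    cases d with
    | tr t => rw [walk_tr] at h ⊢; exact t.isLab.1 _ h i
    | ap g zs =>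
      rw [walk_ap_cons] at h
      rw [List.cons_append, walk_ap_cons]
      by_cases hlt : j < (σ.src g).length
      · rw [dif_pos hlt] at h ⊢
        exact ih _ h i
      · rw [dif_neg hlt]

theorem walk_some : ∀ (p : List ℕ) {s : σ.Srt} (d : Desc σ s) (g : σ.Gen),
    walk r d p = some g → ∀ i,
      (walk r d (p ++ [i])).isSome ↔ i < (σ.src g).length := by
  intro p
  induction p with
  | nil =>
    intro s d g h i
    cases d with
    | tr t => rw [walk_tr] at h ⊢; exact t.isLab.2.1 [] g h i
    | ap g' zs =>
      rw [walk_ap_nil] at h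
      injection h with h; subst h
      rw [List.nil_append, walk_ap_cons]
      by_cases hlt : i < (σ.src g').length
      · rw [dif_pos hlt]
        obtain ⟨g₀, hg₀, -⟩ := walk_root r (r ⟨(σ.src g').get ⟨i, hlt⟩, zs ⟨i, hlt⟩⟩)
        simp only [List.get_eq_getElem] at hg₀
        simp [hg₀, hlt]
      · rw [dif_neg hlt]
        simp [hlt]
  | cons j q ih =>
    intro s d g h i
    cases d with
    | tr t => rw [walk_tr] at h ⊢; exact t.isLab.2.1 _ g h i
    | ap g' zs =>
      rw [walk_ap_cons] at h
      rw [List.cons_append, walk_ap_cons]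
      by_cases hlt : j < (σ.src g').length
      · rw [dif_pos hlt] at h ⊢
        exact ih _ g h i
      · rw [dif_neg hlt] at h
        cases h

theorem walk_sorts : ∀ (p : List ℕ) {s : σ.Srt} (d : Desc σ s) (g : σ.Gen) (i : ℕ)
    (g' : σ.Gen), walk r d p = some g → walk r d (p ++ [i]) = some g' →
      (σ.src g)[i]? = some (σ.tgt g') := by
  intro p
  induction p with
  | nil =>
    intro s d g i g' h h'
    cases d with
    | tr t => rw [walk_tr] at h h'; exact t.isLab.2.2 [] g i g' h h'
    | ap g₁ zs =>
      rw [walk_ap_nil] at h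
      injection h with h; subst h
      rw [List.nil_append, walk_ap_cons] at h'
      by_cases hlt : i < (σ.src g₁).length
      · rw [dif_pos hlt] at h'
        obtain ⟨g₀, hg₀, htg⟩ := walk_root r (r ⟨(σ.src g₁).get ⟨i, hlt⟩, zs ⟨i, hlt⟩⟩)
        rw [hg₀] at h'
        injection h' with h'; subst h'
        rw [List.getElem?_eq_getElem hlt, htg]
        simp [List.get_eq_getElem]
      · rw [dif_neg hlt] at h'
        cases h'
  | cons j q ih =>
    intro s d g i g' h h'
    cases d with
    | tr t => rw [walk_tr] at h h'; exact t.isLab.2.2 _ g i g' h h'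
    | ap g₁ zs =>
      rw [walk_ap_cons] at h
      rw [List.cons_append, walk_ap_cons] at h'
      by_cases hlt : j < (σ.src g₁).length
      · rw [dif_pos hlt] at h h'
        exact ih _ g i g' h h'
      · rw [dif_neg hlt] at h
        cases h

/-- The tree obtained by unfolding a descriptor. -/
noncomputable def treeOf {s : σ.Srt} (d : Desc σ s) : σ.Tree s :=
  ⟨walk r d,
    ⟨fun p h i => walk_none r p _ h i,
     fun p g h i => walk_some r p _ g h i,
     fun p g i g' h h' => walk_sorts r p _ g i g' h h'⟩,
    walk_root r d⟩

theorem treeOf_tr {s : σ.Srt} (t : σ.Tree s) : treeOf r (.tr t) = t :=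
  Tree.ext' (funext fun p => walk_tr r t p)

theorem treeOf_ap (g : σ.Gen) (zs : Fin (σ.src g).length → ℕ) :
    treeOf r (.ap g zs) =
      σ.build g (fun i => treeOf r (r ⟨(σ.src g).get i, zs i⟩)) := by
  apply Tree.ext'
  funext p
  cases p with
  | nil =>
    show walk r (.ap g zs) [] = _
    rw [walk_ap_nil]
    rfl
  | cons i q =>
    show walk r (.ap g zs) (i :: q) = _
    rw [walk_ap_cons]
    rfl

end Resolve

end Sig
namespace Sig

variable {σ : Sig}

section Sol

variable (α : σ.Basic) (vs : List ((s : σ.Srt) × ℕ)) (hwf : α.WF)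
  (hsol : Solved vs α) (R : Set ((s : σ.Srt) × ℕ)) (ρ₀ : σ.Val)

/-- The solution valuation. -/
noncomputable def sol : σ.Val :=
  fun s n => treeOf (resolve α vs hwf hsol R ρ₀) (resolveF α vs hwf hsol R ρ₀ s n)

theorem sol_eq_rho0 (s : σ.Srt) (m : ℕ)
    (h : (⟨s, m⟩ : (s : σ.Srt) × ℕ) ∈ R ∨ pick α ⟨s, m⟩ = none) :
    sol α vs hwf hsol R ρ₀ s m = ρ₀ s m := by
  unfold sol
  rcases h with h | h
  · rw [resolveF, if_pos h, treeOf_tr]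
  · by_cases hR : (⟨s, m⟩ : (s : σ.Srt) × ℕ) ∈ R
    · rw [resolveF, if_pos hR, treeOf_tr]
    · rw [resolveF, if_neg hR]
      split
      · rw [treeOf_tr]
      · rename_i t heq
        rw [h] at heq
        cases heq

theorem sol_eq_of_mem {s : σ.Srt} {m : ℕ} {t : σ.Tm s}
    (he : (⟨s, m, t⟩ : (s : σ.Srt) × ℕ × σ.Tm s) ∈ α.eqs)
    (hR : (⟨s, m⟩ : (s : σ.Srt) × ℕ) ∉ R) :
    sol α vs hwf hsol R ρ₀ s m = t.eval (sol α vs hwf hsol R ρ₀) := by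
  have hp : pick α ⟨s, m⟩ = some t := pick_eq hsol.1 he
  conv_lhs => rw [sol, resolveF, if_neg hR]
  split
  · rename_i heq
    rw [hp] at heq
    cases heq
  · rename_i t' heq
    rw [hp] at heq
    injection heq with heq
    subst heq
    split
    · rename_i n hfc
      have hv := flatCases_inl hfc
      subst hv
      rfl
    · rename_i d hfc
      obtain ⟨g, args, zs, h1, hargs, htt, hdd⟩ := flatCases_inr hfc
      subst h1
      have htt' : t = Tm.app g args := eq_of_heq htt
      subst htt'
      have hdd' : d = Desc.ap g zs := eq_of_heq hdd
      subst hdd'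
      rw [treeOf_ap]
      show _ = σ.build g fun i => (args i).eval _
      congr 1
      funext i
      rw [hargs i]
      rfl

include vs hwf hsol in
theorem solvedSat
    (H1 : ∀ e ∈ α.eqs, (⟨e.1, e.2.1⟩ : (s : σ.Srt) × ℕ) ∈ R →
      ρ₀ e.1 e.2.1 = (e.2.2).eval ρ₀ ∧ ∀ v ∈ (e.2.2).fv, v ∈ R)
    (H2 : ∀ u ∈ α.fins, (ρ₀ u.1 u.2).IsFinite) :
    ∃ ρ' : σ.Val, α.Sat ρ' ∧
      ∀ x : (s : σ.Srt) × ℕ, (x ∈ R ∨ ¬ HasLhs α x) → ρ' x.1 x.2 = ρ₀ x.1 x.2 := by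
  refine ⟨sol α vs hwf hsol R ρ₀, ⟨?_, ?_⟩, ?_⟩
  · rintro ⟨es, en, et⟩ he
    by_cases hR : (⟨es, en⟩ : (s : σ.Srt) × ℕ) ∈ R
    · have h1 := H1 _ he hR
      show sol α vs hwf hsol R ρ₀ es en = _
      rw [sol_eq_rho0 α vs hwf hsol R ρ₀ es en (Or.inl hR), h1.1]
      exact (Tm.eval_congr _ fun v hv =>
        sol_eq_rho0 α vs hwf hsol R ρ₀ v.1 v.2 (Or.inl (h1.2 v hv))).symm
    · exact sol_eq_of_mem α vs hwf hsol R ρ₀ he hR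
  · rintro ⟨us, un⟩ hu
    show (sol α vs hwf hsol R ρ₀ us un).IsFinite
    rw [sol_eq_rho0 α vs hwf hsol R ρ₀ us un (Or.inr (pick_none_of_fins hsol.1 hu))]
    exact H2 _ hu
  · rintro ⟨s, n⟩ h
    rcases h with h | h
    · exact sol_eq_rho0 α vs hwf hsol R ρ₀ s n (Or.inl h)
    · cases hpk : pick α (⟨s, n⟩ : (s : σ.Srt) × ℕ) with
      | none => exact sol_eq_rho0 α vs hwf hsol R ρ₀ s n (Or.inr hpk)
      | some t => exact absurd ⟨⟨s, n, t⟩, pick_mem hpk, rfl⟩ h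

end Sol

end Sig

theorem reach_base {σ : Sig} {xs : List ((s : σ.Srt) × ℕ)} {α : σ.Basic}
    {v : (s : σ.Srt) × ℕ} (h1 : v ∈ α.vars) (h2 : v ∉ xs) : v ∈ reachSet σ xs α :=
  ⟨v, h1, h2, Relation.ReflTransGen.refl⟩

theorem reach_step {σ : Sig} {xs : List ((s : σ.Srt) × ℕ)} {α : σ.Basic}
    {e : (s : σ.Srt) × ℕ × σ.Tm s} (he : e ∈ α.eqs)
    (hR : (⟨e.1, e.2.1⟩ : (s : σ.Srt) × ℕ) ∈ reachSet σ xs α)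
    {v : (s : σ.Srt) × ℕ} (hv : v ∈ (e.2.2).fv) : v ∈ reachSet σ xs α := by
  obtain ⟨w, hw1, hw2, hw3⟩ := hR
  exact ⟨w, hw1, hw2, hw3.tail ⟨e, he, rfl, hv⟩⟩


/-- Let `α` be a solved basic formula; let `x̄'` be the variables
of `x̄` reachable in `α` from the free variables of `∃x̄. α` and `α'` the conjunction
of the conjuncts of `α` reachable from those free variables. Then `∃x̄. α` and
`∃x̄'. α'` are equivalent in the extended theory of trees. -/
theorem remove_unreachable (σ : Sig) (hne : ∀ s : σ.Srt, (σ.Gens s).Nonempty)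
    (xs : List ((s : σ.Srt) × ℕ)) (α : σ.Basic)
    (vs : List ((s : σ.Srt) × ℕ)) (hnd : vs.Nodup) (hwf : α.WF)
    (hsol : Sig.Solved vs α)
    (xs' : List ((s : σ.Srt) × ℕ)) (α' : σ.Basic)
    (hxs' : ∀ x, x ∈ xs' ↔ x ∈ xs ∧ x ∈ reachSet σ xs α)
    (heqs : ∀ e, e ∈ α'.eqs ↔ e ∈ α.eqs ∧
        (⟨e.1, e.2.1⟩ : (s : σ.Srt) × ℕ) ∈ reachSet σ xs α)
    (hfins : ∀ u, u ∈ α'.fins ↔ u ∈ α.fins ∧ u ∈ reachSet σ xs α) :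
    ∀ ρ : σ.Val, SatEx σ xs α ρ ↔ SatEx σ xs' α' ρ := by
  classical
  intro ρ
  constructor
  · rintro ⟨ρ₁, hag, hsat⟩
    refine ⟨fun s n => if (⟨s, n⟩ : (s : σ.Srt) × ℕ) ∈ reachSet σ xs α
      then ρ₁ s n else ρ s n, ?_, ?_, ?_⟩
    · intro s n hn
      by_cases hR : (⟨s, n⟩ : (s : σ.Srt) × ℕ) ∈ reachSet σ xs α
      · show (if _ then _ else _) = _
        rw [if_pos hR]
        exact hag s n fun hx => hn ((hxs' ⟨s, n⟩).2 ⟨hx, hR⟩)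
      · show (if _ then _ else _) = _
        rw [if_neg hR]
    · rintro ⟨es, en, et⟩ he
      obtain ⟨heα, heR⟩ := (heqs _).1 he
      show (if (⟨es, en⟩ : (s : σ.Srt) × ℕ) ∈ reachSet σ xs α then ρ₁ es en else ρ es en) = _
      rw [if_pos heR, hsat.1 _ heα]
      exact (Sig.Tm.eval_congr _ fun v hv => if_pos (reach_step heα heR hv)).symm
    · rintro ⟨us, un⟩ hu
      obtain ⟨huα, huR⟩ := (hfins _).1 hu
      show Sig.Tree.IsFinite (if (⟨us, un⟩ : (s : σ.Srt) × ℕ) ∈ reachSet σ xs α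
        then ρ₁ us un else ρ us un)
      rw [if_pos huR]
      exact hsat.2 _ huα
  · rintro ⟨ρ₂, hag, hsat⟩
    set ρ₀ : σ.Val := fun s n =>
        if (⟨s, n⟩ : (s : σ.Srt) × ℕ) ∈ reachSet σ xs α then ρ₂ s n
        else if h : ((⟨s, n⟩ : (s : σ.Srt) × ℕ) ∈ α.fins ∧ ∃ t : σ.Tree s, t.IsFinite)
          then h.2.choose
        else ρ s n with hρ₀
    have H1 : ∀ e ∈ α.eqs, (⟨e.1, e.2.1⟩ : (s : σ.Srt) × ℕ) ∈ reachSet σ xs α →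
        ρ₀ e.1 e.2.1 = (e.2.2).eval ρ₀ ∧ ∀ v ∈ (e.2.2).fv, v ∈ reachSet σ xs α := by
      rintro ⟨es, en, et⟩ he hR'
      have he' := (heqs ⟨es, en, et⟩).2 ⟨he, hR'⟩
      constructor
      · show (if (⟨es, en⟩ : (s : σ.Srt) × ℕ) ∈ reachSet σ xs α then ρ₂ es en else _) = _
        rw [if_pos hR', hsat.1 _ he']
        exact (Sig.Tm.eval_congr _ fun v hv => if_pos (reach_step he hR' hv)).symm
      · exact fun v hv => reach_step he hR' hv
    have H2 : ∀ u ∈ α.fins, (ρ₀ u.1 u.2).IsFinite := by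
      rintro ⟨us, un⟩ hu
      by_cases hR' : (⟨us, un⟩ : (s : σ.Srt) × ℕ) ∈ reachSet σ xs α
      · show Sig.Tree.IsFinite (if (⟨us, un⟩ : (s : σ.Srt) × ℕ) ∈ reachSet σ xs α
          then ρ₂ us un else _)
        rw [if_pos hR']
        exact hsat.2 _ ((hfins ⟨us, un⟩).2 ⟨hu, hR'⟩)
      · have hconj : (⟨us, un⟩ : (s : σ.Srt) × ℕ) ∈ α.fins ∧
            ∃ t : σ.Tree us, t.IsFinite := ⟨hu, (hsol.2.2 _ hu).1⟩
        show Sig.Tree.IsFinite (if (⟨us, un⟩ : (s : σ.Srt) × ℕ) ∈ reachSet σ xs α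
          then ρ₂ us un
          else if h : ((⟨us, un⟩ : (s : σ.Srt) × ℕ) ∈ α.fins ∧ ∃ t : σ.Tree us, t.IsFinite)
            then h.2.choose else ρ us un)
        rw [if_neg hR', dif_pos hconj]
        exact hconj.2.choose_spec
    obtain ⟨ρ', hsat', hagr⟩ := Sig.solvedSat α vs hwf hsol (reachSet σ xs α) ρ₀ H1 H2
    refine ⟨ρ', ?_, hsat'⟩
    intro s n hn
    have hn' : (⟨s, n⟩ : (s : σ.Srt) × ℕ) ∉ xs := hn
    have hor : (⟨s, n⟩ : (s : σ.Srt) × ℕ) ∈ reachSet σ xs α ∨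
        ¬ Sig.HasLhs α ⟨s, n⟩ := by
      by_cases hR' : (⟨s, n⟩ : (s : σ.Srt) × ℕ) ∈ reachSet σ xs α
      · exact Or.inl hR'
      · refine Or.inr fun h => hR' ?_
        obtain ⟨e, he, hlhs⟩ := h
        exact reach_base (Or.inl ⟨e, he, Or.inl hlhs⟩) hn'
    refine (hagr ⟨s, n⟩ hor).trans ?_
    show (if (⟨s, n⟩ : (s : σ.Srt) × ℕ) ∈ reachSet σ xs α then ρ₂ s n
      else if h : ((⟨s, n⟩ : (s : σ.Srt) × ℕ) ∈ α.fins ∧ ∃ t : σ.Tree s, t.IsFinite)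
        then h.2.choose
      else ρ s n) = ρ s n
    by_cases hR' : (⟨s, n⟩ : (s : σ.Srt) × ℕ) ∈ reachSet σ xs α
    · rw [if_pos hR']
      exact hag s n fun hmem => hn' ((hxs' ⟨s, n⟩).1 hmem).1
    · have hnf : (⟨s, n⟩ : (s : σ.Srt) × ℕ) ∉ α.fins :=
        fun hf => hR' (reach_base (Or.inr hf) hn')
      rw [if_neg hR']
      exact dif_neg fun hc => hnf hc.1
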